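/- Let X be a complex Banach space and L(X) the Banach algebra of bounded linear operators on X. Let M = [[A, B], [C, D]] ∈ M₂(L(X)) and suppose A and D have strongly Drazin inverses. If B D D^D = 0, D^π C B = 0 and D^π C A = 0, where D^D is the Drazin inverse of D and D^π = I − D·D^D, then M has a Hirano inverse in M₂(L(X)). -/

import Mathlib

/-- `a` has a Hirano inverse: there exists `z` with `az = za`, `z = zaz`,
and `a^2 - az` nilpotent. -/
def HasHiranoInverse {R : Type*} [Ring R] (a : R) : Prop :=
  ∃ z : R, a * z = z * a ∧ z = z * a * z ∧ IsNilpotent (a ^ 2 - a * z)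

/-- `a` has a strongly Drazin inverse: there exists `z` with `az = za`, `z = zaz`,
and `a - az` nilpotent. -/
def HasStronglyDrazinInverse {R : Type*} [Ring R] (a : R) : Prop :=
  ∃ z : R, a * z = z * a ∧ z = z * a * z ∧ IsNilpotent (a - a * z)


open Matrix

section Helpers
variable {R : Type*} [Ring R]

lemma nilp_of_coe (S : Subring R) (x : S) (h : IsNilpotent (x : R)) : IsNilpotent x := by
  obtain ⟨n, hn⟩ := h
  exact ⟨n, Subtype.ext (by push_cast; exact hn)⟩

lemma coe_of_nilp (S : Subring R) (x : S) (h : IsNilpotent x) : IsNilpotent (x : R) :=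
  h.map S.subtype

-- commutative versions
lemma c1 {A : Type*} [CommRing A] (a e : A) (he : e * e = e) (h : IsNilpotent (a - e)) :
    IsNilpotent (a - a ^ 3) := by
  have key : a - a ^ 3 = (a - e) * (1 - a ^ 2 - a * e - e) := by linear_combination (-a - 1) * he
  rw [key]
  exact (Commute.all _ _).isNilpotent_mul_right h

lemma c2 {A : Type*} [CommRing A] (a e : A) (he : e * e = e) (h : IsNilpotent (a - e)) :
    IsNilpotent (a - a * e) := by
  have key : a - a * e = (a - e) * (1 - e) := by linear_combination -he
  rw [key]
  exact (Commute.all _ _).isNilpotent_mul_right h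

end Helpers

lemma hirano_comm {A : Type*} [CommRing A] (a : A) (h : IsNilpotent (a - a ^ 3)) :
    ∃ z : A, a * z = z * a ∧ z = z * a * z ∧ IsNilpotent (a ^ 2 - a * z) := by
  obtain ⟨m, hm⟩ := h
  rcases m with _ | n
  · have h0 : (1 : A) = 0 := by simpa using hm
    have : Subsingleton A := subsingleton_of_zero_eq_one h0.symm
    exact ⟨0, Subsingleton.elim _ _, Subsingleton.elim _ _, ⟨1, Subsingleton.elim _ _⟩⟩
  set b := a ^ 2 with hb
  have hbb : (b - b ^ 2) ^ (n + 1) = 0 := by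
    have h1 : b - b ^ 2 = a * (a - a ^ 3) := by rw [hb]; ring
    rw [h1, mul_pow, hm, mul_zero]
  have he := isIdempotentElem_one_sub_one_sub_pow_pow b (n + 1) hbb
  set e := 1 - (1 - b ^ (n + 1)) ^ (n + 1) with hedef
  obtain ⟨t, ht⟩ : b ^ (n + 1) ∣ e := by
    have h1 := sub_dvd_pow_sub_pow (1 : A) (1 - b ^ (n + 1)) (n + 1)
    rwa [sub_sub_cancel, one_pow] at h1
  set c := ∑ i ∈ Finset.range (n + 1), b ^ i with hcdef
  have hgs : (1 - b) * c = 1 - b ^ (n + 1) := by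
    have h1 := geom_sum_mul b (n + 1); linear_combination -h1
  set s := e - b * e with hsdef
  have hsm : s ^ (n + 1) = 0 := by
    have h1 : s = e * (1 - b) := by rw [hsdef]; ring
    have h2 : s ^ (n + 1) = e * (1 - b) ^ (n + 1) := by
      rw [h1, mul_pow, he.pow_succ_eq]
    rw [h2, ht]
    calc b ^ (n + 1) * t * (1 - b) ^ (n + 1) = t * (b * (1 - b)) ^ (n + 1) := by
          rw [mul_pow]; ring
      _ = t * (b - b ^ 2) ^ (n + 1) := by ring_nf
      _ = 0 := by rw [hbb, mul_zero]
  set g := ∑ i ∈ Finset.range (n + 1), s ^ i with hgdef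
  have hg : (1 - s) * g = 1 := by
    have h1 := geom_sum_mul s (n + 1)
    rw [hsm] at h1
    linear_combination -h1
  have hes : e * s = s := by rw [hsdef]; linear_combination (1 - b) * he.eq
  have key : a ^ 2 * e * g = e := by
    have h1 : a ^ 2 * e = e - s := by rw [hsdef, hb]; ring
    calc a ^ 2 * e * g = (e - s) * g := by rw [h1]
      _ = e * ((1 - s) * g) := by linear_combination g * hes
      _ = e := by rw [hg, mul_one]
  refine ⟨a * e * g, by ring, ?_, ?_⟩
  · calc a * e * g = a * (e * e) * g := by rw [he.eq]
      _ = e * (a * e * g) := by ring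
      _ = (a ^ 2 * e * g) * (a * e * g) := by rw [key]
      _ = a * e * g * a * (a * e * g) := by ring
  · have h1 : a ^ 2 - a * (a * e * g) = a ^ 2 - e := by
      rw [show a * (a * e * g) = a ^ 2 * e * g from by ring, key]
    rw [h1]
    have nil1 : IsNilpotent (b * (1 - e)) := by
      have h2 : 1 - e = ((1 - b) * c) ^ (n + 1) := by rw [hedef, sub_sub_cancel, hgs]
      have h3 : b * (1 - e) = (b - b ^ 2) * ((1 - b) ^ n * c ^ (n + 1)) := by
        rw [h2, mul_pow]; ring
      rw [h3]
      exact (Commute.all _ _).isNilpotent_mul_right ⟨n + 1, hbb⟩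
    have nil2 : IsNilpotent s := ⟨n + 1, hsm⟩
    have h4 : a ^ 2 - e = b * (1 - e) - s := by rw [hsdef, hb]; ring
    rw [h4]
    exact (Commute.all _ _).isNilpotent_sub nil1 nil2
section NC
variable {R : Type*} [Ring R]

lemma pair_comm_aux (a e : R) (hc : a * e = e * a) :
    ∀ x ∈ ({a, e} : Set R), ∀ y ∈ ({a, e} : Set R), x * y = y * x := by
  intro x hx y hy
  simp only [Set.mem_insert_iff, Set.mem_singleton_iff] at hx hy
  rcases hx with rfl | rfl <;> rcases hy with rfl | rfl <;> simp [hc]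

lemma nilp_cube (a e : R) (he : e * e = e) (hc : a * e = e * a)
    (h : IsNilpotent (a - e)) : IsNilpotent (a - a ^ 3) := by
  letI := Subring.closureCommRingOfComm (pair_comm_aux a e hc)
  let S := Subring.closure ({a, e} : Set R)
  let a' : S := ⟨a, Subring.subset_closure (by simp)⟩
  let e' : S := ⟨e, Subring.subset_closure (by simp)⟩
  have h' : IsNilpotent (a' - e') := by
    obtain ⟨n, hn⟩ := h
    exact ⟨n, Subtype.ext (by push_cast; exact hn)⟩
  have he'' : e' * e' = e' := Subtype.ext he
  obtain ⟨n, hn⟩ := c1 a' e' he'' h'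
  exact ⟨n, by have := congrArg Subtype.val hn; push_cast at this; convert this using 2⟩

lemma nilp_mul_idem (a e : R) (he : e * e = e) (hc : a * e = e * a)
    (h : IsNilpotent (a - e)) : IsNilpotent (a - a * e) := by
  letI := Subring.closureCommRingOfComm (pair_comm_aux a e hc)
  let S := Subring.closure ({a, e} : Set R)
  let a' : S := ⟨a, Subring.subset_closure (by simp)⟩
  let e' : S := ⟨e, Subring.subset_closure (by simp)⟩
  have h' : IsNilpotent (a' - e') := by
    obtain ⟨n, hn⟩ := h
    exact ⟨n, Subtype.ext (by push_cast; exact hn)⟩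
  have he'' : e' * e' = e' := Subtype.ext he
  obtain ⟨n, hn⟩ := c2 a' e' he'' h'
  exact ⟨n, by have := congrArg Subtype.val hn; push_cast at this; convert this using 2⟩

lemma hasHiranoInverse_of_isNilpotent (a : R) (h : IsNilpotent (a - a ^ 3)) :
    HasHiranoInverse a := by
  have hcomm : ∀ x ∈ ({a} : Set R), ∀ y ∈ ({a} : Set R), x * y = y * x := by
    intro x hx y hy
    simp only [Set.mem_singleton_iff] at hx hy
    subst hx; subst hy; rfl
  letI := Subring.closureCommRingOfComm hcomm
  let S := Subring.closure ({a} : Set R)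
  let a' : S := ⟨a, Subring.subset_closure rfl⟩
  have h' : IsNilpotent (a' - a' ^ 3) := by
    obtain ⟨n, hn⟩ := h
    exact ⟨n, Subtype.ext (by push_cast; exact hn)⟩
  obtain ⟨z, hz1, hz2, hz3⟩ := hirano_comm a' h'
  refine ⟨(z : R), ?_, ?_, ?_⟩
  · exact congrArg Subtype.val hz1
  · exact congrArg Subtype.val hz2
  · obtain ⟨n, hn⟩ := hz3
    exact ⟨n, by have := congrArg Subtype.val hn; push_cast at this; convert this using 2⟩

end NC

section Mat
variable {R : Type*} [Ring R]

lemma sub_fin_two' (a b c d e f g h : R) :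
    (!![a, b; c, d] - !![e, f; g, h] : Matrix (Fin 2) (Fin 2) R) = !![a - e, b - f; c - g, d - h] := by
  ext i j; fin_cases i <;> fin_cases j <;> simp

lemma add_fin_two' (a b c d e f g h : R) :
    (!![a, b; c, d] + !![e, f; g, h] : Matrix (Fin 2) (Fin 2) R) = !![a + e, b + f; c + g, d + h] := by
  ext i j; fin_cases i <;> fin_cases j <;> simp

lemma zero_fin_two' : (!![0, 0; 0, 0] : Matrix (Fin 2) (Fin 2) R) = 0 := by
  ext i j; fin_cases i <;> fin_cases j <;> simp

lemma lt_pow (a c d : R) (n : ℕ) : ∃ s : R,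
    (!![a, 0; c, d] : Matrix (Fin 2) (Fin 2) R) ^ (n + 1) = !![a ^ (n + 1), 0; s, d ^ (n + 1)] := by
  induction n with
  | zero => exact ⟨c, by simp⟩
  | succ k ih =>
    obtain ⟨s, hs⟩ := ih
    refine ⟨s * a + d ^ (k + 1) * c, ?_⟩
    rw [pow_succ, hs, Matrix.mul_fin_two]
    ext i j
    fin_cases i <;> fin_cases j <;> simp [pow_succ]

lemma ut_pow (a b d : R) (n : ℕ) : ∃ s : R,
    (!![a, b; 0, d] : Matrix (Fin 2) (Fin 2) R) ^ (n + 1) = !![a ^ (n + 1), s; 0, d ^ (n + 1)] := by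
  induction n with
  | zero => exact ⟨b, by simp⟩
  | succ k ih =>
    obtain ⟨s, hs⟩ := ih
    refine ⟨a ^ (k + 1) * b + s * d, ?_⟩
    rw [pow_succ, hs, Matrix.mul_fin_two]
    ext i j
    fin_cases i <;> fin_cases j <;> simp [pow_succ]

lemma lt_nilp (a c d : R) (ha : IsNilpotent a) (hd : IsNilpotent d) :
    IsNilpotent (!![a, 0; c, d] : Matrix (Fin 2) (Fin 2) R) := by
  obtain ⟨p, hp⟩ := ha
  obtain ⟨q, hq⟩ := hd
  rcases p with _ | p
  · have h0 : (1 : R) = 0 := by simpa using hp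
    haveI := subsingleton_of_zero_eq_one h0.symm
    exact ⟨1, by ext i j; exact Subsingleton.elim _ _⟩
  rcases q with _ | q
  · have h0 : (1 : R) = 0 := by simpa using hq
    haveI := subsingleton_of_zero_eq_one h0.symm
    exact ⟨1, by ext i j; exact Subsingleton.elim _ _⟩
  obtain ⟨s1, h1⟩ := lt_pow a c d p
  obtain ⟨s2, h2⟩ := lt_pow a c d q
  refine ⟨(q + 1) + (p + 1), ?_⟩
  rw [pow_add, h1, h2, hp, hq, Matrix.mul_fin_two]
  ext i j
  fin_cases i <;> fin_cases j <;> simp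

lemma ut_nilp (a b d : R) (ha : IsNilpotent a) (hd : IsNilpotent d) :
    IsNilpotent (!![a, b; 0, d] : Matrix (Fin 2) (Fin 2) R) := by
  obtain ⟨p, hp⟩ := ha
  obtain ⟨q, hq⟩ := hd
  rcases p with _ | p
  · have h0 : (1 : R) = 0 := by simpa using hp
    haveI := subsingleton_of_zero_eq_one h0.symm
    exact ⟨1, by ext i j; exact Subsingleton.elim _ _⟩
  rcases q with _ | q
  · have h0 : (1 : R) = 0 := by simpa using hq
    haveI := subsingleton_of_zero_eq_one h0.symm
    exact ⟨1, by ext i j; exact Subsingleton.elim _ _⟩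
  obtain ⟨s1, h1⟩ := ut_pow a b d p
  obtain ⟨s2, h2⟩ := ut_pow a b d q
  refine ⟨(p + 1) + (q + 1), ?_⟩
  rw [pow_add, h1, h2, hp, hq, Matrix.mul_fin_two]
  ext i j
  fin_cases i <;> fin_cases j <;> simp

lemma nilp_sum (x y : R) (hxy : x * y = 0) (hx : IsNilpotent (x - x ^ 3))
    (hy : IsNilpotent (y - y ^ 3)) : IsNilpotent ((x + y) - (x + y) ^ 3) := by
  set w := (x + y) - (x + y) ^ 3 with hw
  set u := x - x ^ 3 with hu
  set v := y - y ^ 3 with hv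
  set cc := 1 - x ^ 2 - y * x - y ^ 2 with hcc
  -- key identity (i)
  have hi : x * w = u * x := by
    have h1 : x * (x + y) = x * x := by rw [mul_add, hxy, add_zero]
    have h2 : x * x * (x + y) = x * x * x := by
      rw [mul_add, mul_assoc x x y, hxy, mul_zero, add_zero]
    have h3 : x * x * x * (x + y) = x * x * x * x := by
      rw [mul_add, mul_assoc (x * x) x y, hxy, mul_zero, add_zero]
    have h4 : x * (x + y) ^ 3 = x * x * x * x := by
      rw [pow_succ, pow_two, ← mul_assoc, ← mul_assoc, h1, h2, h3]
    rw [hw, hu, mul_sub, h1, h4]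
    noncomm_ring
  -- key identity (ii)
  have hsq : (x + y) ^ 2 = x ^ 2 + y * x + y ^ 2 := by
    rw [pow_two, add_mul, mul_add, mul_add, hxy]
    noncomm_ring
  have hcube : (x + y) ^ 3 = x ^ 3 + y * x ^ 2 + y ^ 2 * x + y ^ 3 := by
    rw [pow_succ, hsq, add_mul, add_mul, mul_add, mul_add, mul_add]
    have e1 : x ^ 2 * y = 0 := by rw [pow_two, mul_assoc, hxy, mul_zero]
    have e2 : y * x * y = 0 := by rw [mul_assoc, hxy, mul_zero]
    rw [e1, e2]
    noncomm_ring
  have hii : cc * x + v = w := by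
    rw [hcc, hv, hw, hcube]
    noncomm_ring
  -- the companion matrix
  have hW : (!![x, 0; 1, y] : Matrix (Fin 2) (Fin 2) R) -
      (!![x, 0; 1, y] : Matrix (Fin 2) (Fin 2) R) ^ 3 = !![u, 0; cc, v] := by
    have h3 : (!![x, 0; 1, y] : Matrix (Fin 2) (Fin 2) R) ^ 3 =
        !![x, 0; 1, y] * !![x, 0; 1, y] * !![x, 0; 1, y] := by
      rw [pow_succ, pow_two]
    rw [h3, Matrix.mul_fin_two, Matrix.mul_fin_two, sub_fin_two']
    rw [hu, hcc, hv]
    ext i j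
    fin_cases i <;> fin_cases j <;> simp <;> noncomm_ring
  -- claim: entries of powers of !![u,0;cc,v] track powers of w
  have claim : ∀ n : ℕ, ∃ P Q S : R,
      (!![u, 0; cc, v] : Matrix (Fin 2) (Fin 2) R) ^ n = !![P, 0; Q, S] ∧ Q * x + S = w ^ n := by
    intro n
    induction n with
    | zero =>
      exact ⟨1, 0, 1, by rw [pow_zero, Matrix.one_fin_two], by rw [pow_zero, zero_mul, zero_add]⟩
    | succ k ih =>
      obtain ⟨P, Q, S, h1, h2⟩ := ih
      refine ⟨P * u, Q * u + S * cc, S * v, ?_, ?_⟩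
      · rw [pow_succ, h1, Matrix.mul_fin_two]
        ext i j
        fin_cases i <;> fin_cases j <;> simp
      · calc (Q * u + S * cc) * x + S * v = Q * (u * x) + S * (cc * x + v) := by noncomm_ring
          _ = Q * (x * w) + S * w := by rw [← hi, hii]
          _ = (Q * x + S) * w := by noncomm_ring
          _ = w ^ k * w := by rw [h2]
          _ = w ^ (k + 1) := (pow_succ w k).symm
  -- nilpotency of the companion
  have hWnil : IsNilpotent (!![u, 0; cc, v] : Matrix (Fin 2) (Fin 2) R) := lt_nilp u cc v hx hy
  obtain ⟨N, hN⟩ := hWnil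
  obtain ⟨P, Q, S, h1, h2⟩ := claim N
  rw [h1] at hN
  have hQ : Q = 0 := by simpa using congrFun (congrFun hN 1) 0
  have hS : S = 0 := by simpa using congrFun (congrFun hN 1) 1
  exact ⟨N, by rw [← h2, hQ, hS, zero_mul, zero_add]⟩

end Mat

variable {X : Type*} [NormedAddCommGroup X] [NormedSpace ℂ X] [CompleteSpace X]

theorem hirano_perturb_thm27 (A B C D DD : X →L[ℂ] X)
    (hA : HasStronglyDrazinInverse A)
    (hDD : D * DD = DD * D ∧ DD = DD * D * DD ∧ IsNilpotent (D - D * DD))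
    (h1 : B * D * DD = 0)
    (h2 : (1 - D * DD) * C * B = 0)
    (h3 : (1 - D * DD) * C * A = 0) :
    HasHiranoInverse (!![A, B; C, D] : Matrix (Fin 2) (Fin 2) (X →L[ℂ] X)) := by
  obtain ⟨hDD1, hDD2, hDD3⟩ := hDD
  -- basic facts about the idempotent π = D * DD
  have hππ : (D * DD) * (D * DD) = D * DD := by
    rw [mul_assoc, ← mul_assoc DD D DD, ← hDD2]
  have hcom : D * (D * DD) = (D * DD) * D := by
    rw [mul_assoc, ← hDD1]
  have cDπ : Commute D (D * DD) := hcom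
  have hBπ : B * (D * DD) = 0 := by rw [← mul_assoc]; exact h1
  -- nilpotency facts
  have hDe : IsNilpotent (D - D * (D * DD)) := nilp_mul_idem D (D * DD) hππ hcom hDD3
  have hnilu' : IsNilpotent (D * (D * DD) - D * DD) := by
    have hid : D * (D * DD) - D * DD = (D - D * DD) * (D * DD) := by
      rw [sub_mul, hππ]
    rw [hid]
    exact ((cDπ.sub_left (Commute.refl _)).isNilpotent_mul_right hDD3)
  have hu : IsNilpotent (D * (D * DD) - (D * (D * DD)) ^ 3) :=
    nilp_cube (D * (D * DD)) (D * DD) hππ (cDπ.mul_left (Commute.refl _)).eq hnilu'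
  -- A - A^3 nilpotent
  obtain ⟨z, hz1, hz2, hz3⟩ := hA
  have he : (A * z) * (A * z) = A * z := by
    rw [mul_assoc, ← mul_assoc z A z, ← hz2]
  have hcAe : A * (A * z) = (A * z) * A := by rw [mul_assoc, ← hz1]
  have hA3 : IsNilpotent (A - A ^ 3) := nilp_cube A (A * z) he hcAe hz3
  -- products vanishing
  have f1 : B * (D * (DD * C)) = 0 := by rw [← mul_assoc, ← mul_assoc, h1, zero_mul]
  have f2' : B * (D * (D * DD)) = 0 := by
    rw [hDD1, ← mul_assoc, ← mul_assoc, h1, zero_mul]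
  -- the three matrices
  set Sm : Matrix (Fin 2) (Fin 2) (X →L[ℂ] X) := !![A, B; 0, 0] with hSm
  set Rm : Matrix (Fin 2) (Fin 2) (X →L[ℂ] X) := !![0, 0; D * DD * C, D * (D * DD)] with hRm
  set Qm : Matrix (Fin 2) (Fin 2) (X →L[ℂ] X) :=
    !![0, 0; C - D * DD * C, D - D * (D * DD)] with hQm
  have hSR : Sm * Rm = 0 := by
    rw [hSm, hRm, Matrix.mul_fin_two]
    ext i j
    fin_cases i <;> fin_cases j <;> simp [mul_assoc, f1, f2']
  have hP : Sm + Rm = !![A, B; D * DD * C, D * (D * DD)] := by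
    rw [hSm, hRm, add_fin_two']
    ext i j
    fin_cases i <;> fin_cases j <;> simp
  have g1 : (C - D * DD * C) * A = 0 := by
    have hid : (1 - D * DD) * C = C - D * DD * C := by rw [sub_mul, one_mul]
    rw [← hid]; exact h3
  have g3 : (C - D * DD * C) * B = 0 := by
    have hid : (1 - D * DD) * C = C - D * DD * C := by rw [sub_mul, one_mul]
    rw [← hid]; exact h2
  have g2a : (D - D * (D * DD)) * (D * DD) = 0 := by
    rw [sub_mul, mul_assoc, hππ, sub_self]
  have g2 : (D - D * (D * DD)) * (D * DD * C) = 0 := by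
    rw [← mul_assoc, g2a, zero_mul]
  have g4 : (D - D * (D * DD)) * (D * (D * DD)) = 0 := by
    nth_rewrite 2 [hcom]
    rw [← mul_assoc, g2a, zero_mul]
  have hQP : Qm * (Sm + Rm) = 0 := by
    rw [hP, hQm, Matrix.mul_fin_two]
    ext i j
    fin_cases i <;> fin_cases j <;> simp [g1, g2, g3, g4]
  have hMQ : (!![A, B; C, D] : Matrix (Fin 2) (Fin 2) (X →L[ℂ] X)) = Qm + (Sm + Rm) := by
    rw [hP, hQm, add_fin_two']
    ext i j
    fin_cases i <;> fin_cases j <;> simp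
  -- nilpotency of the three pieces
  have hS3 : IsNilpotent (Sm - Sm ^ 3) := by
    obtain ⟨s, hs⟩ := ut_pow A B (0 : X →L[ℂ] X) 2
    norm_num at hs
    have hid : Sm - Sm ^ 3 = !![A - A ^ 3, B - s; 0, 0] := by
      rw [hSm, hs, sub_fin_two']
      ext i j
      fin_cases i <;> fin_cases j <;> simp
    rw [hid]
    exact ut_nilp _ _ _ hA3 ⟨1, by simp⟩
  have hR3 : IsNilpotent (Rm - Rm ^ 3) := by
    obtain ⟨s, hs⟩ := lt_pow (0 : X →L[ℂ] X) (D * DD * C) (D * (D * DD)) 2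
    norm_num at hs
    have hid : Rm - Rm ^ 3 = !![0, 0; D * DD * C - s, D * (D * DD) - (D * (D * DD)) ^ 3] := by
      rw [hRm, hs, sub_fin_two']
      ext i j
      fin_cases i <;> fin_cases j <;> simp
    rw [hid]
    exact lt_nilp _ _ _ ⟨1, by simp⟩ hu
  have hQnil : IsNilpotent Qm := by
    rw [hQm]
    exact lt_nilp _ _ _ ⟨1, by simp⟩ hDe
  have hQ3 : IsNilpotent (Qm - Qm ^ 3) := by
    have hid : Qm - Qm ^ 3 = Qm * (1 - Qm ^ 2) := by noncomm_ring
    rw [hid]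
    exact ((Commute.one_right Qm).sub_right ((Commute.refl Qm).pow_right 2)).isNilpotent_mul_right
      hQnil
  have hP3 : IsNilpotent ((Sm + Rm) - (Sm + Rm) ^ 3) := nilp_sum Sm Rm hSR hS3 hR3
  have hM3 : IsNilpotent ((!![A, B; C, D] : Matrix (Fin 2) (Fin 2) (X →L[ℂ] X)) -
      (!![A, B; C, D] : Matrix (Fin 2) (Fin 2) (X →L[ℂ] X)) ^ 3) := by
    rw [hMQ]
    exact nilp_sum Qm (Sm + Rm) hQP hQ3 hP3
  exact hasHiranoInverse_of_isNilpotent _ hM3
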